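/- arXiv:1509.06424 — 2 statements merged into one kernel-verified Lean document; each statement's English description precedes it below -/
import Mathlib

section
/- Let Y be a simplicial set and δ_0, …, δ_n pairwise commuting simplicial automorphisms of Y. For a q-simplex w of Δ[n] let m_k(w) be the number of p with w(p) = k, and define α_q : Y_q × Δ[n]_q → Y_q × Δ[n]_q by α_q(y, w) = ((δ_0^{1−m_0(w)} ∘ ⋯ ∘ δ_n^{1−m_n(w)})(y), w). Then for all q and all 0 ≤ i ≤ q, s_i^δ(α_q(y, w)) = α_{q+1}(s_i y, s_i w), and each α_q is a bijection. Consequently α is an isomorphism of simplicial sets from the Cartesian product Y × Δ[n] to the δ-twisted Cartesian product Y ×_δ Δ[n], commuting with the projections to Δ[n]. -/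
open CategoryTheory Simplicial

universe u

namespace TwistedDelta

/-- The `q`-simplices of the standard simplicial `n`-simplex `Δ[n]`:
monotone maps `{0,…,q} → {0,…,n}`. -/
def DeltaSimp (n q : ℕ) : Type :=
  { w : Fin (q + 1) → Fin (n + 1) // Monotone w }

/-- The face `d_i` of `Δ[n]`, precomposing with the `i`-th coface (skipping `i`). -/
def DeltaSimp.face {n q : ℕ} (i : Fin (q + 2)) (w : DeltaSimp n (q + 1)) : DeltaSimp n q :=
  ⟨w.1 ∘ i.succAbove, w.2.comp (Fin.strictMono_succAbove i).monotone⟩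

/-- The degeneracy `s_i` of `Δ[n]`, precomposing with the `i`-th codegeneracy (repeating `i`). -/
def DeltaSimp.degen {n q : ℕ} (i : Fin (q + 1)) (w : DeltaSimp n q) : DeltaSimp n (q + 1) :=
  ⟨w.1 ∘ i.predAbove, w.2.comp (Fin.predAbove_right_monotone i)⟩

/-- `m_k(w)`: the number of `p` with `w(p) = k`. -/
def mult {n q : ℕ} (k : Fin (n + 1)) (w : DeltaSimp n q) : ℕ :=
  (Finset.univ.filter fun p => w.1 p = k).card

/-- The untwisting automorphism `δ_0^{1−m_0(w)} ∘ δ_1^{1−m_1(w)} ∘ ⋯ ∘ δ_n^{1−m_n(w)}`. -/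
def untwist {n : ℕ} (Y : SSet.{u}) (δ : Fin (n + 1) → Aut Y) {q : ℕ} (w : DeltaSimp n q) :
    Aut Y :=
  (List.ofFn fun k => (δ k) ^ ((1 : ℤ) - mult k w)).prod

/-- The map `α_q : Y_q × Δ[n]_q → Y_q × Δ[n]_q`,
`α_q(y, w) = ((δ_0^{1−m_0(w)} ∘ ⋯ ∘ δ_n^{1−m_n(w)})(y), w)`. -/
def alphaMap {n : ℕ} (Y : SSet.{u}) (δ : Fin (n + 1) → Aut Y) (q : ℕ) :
    Y _⦋q⦌ × DeltaSimp n q → Y _⦋q⦌ × DeltaSimp n q :=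
  fun p => ((untwist Y δ p.2).hom.app (Opposite.op (SimplexCategory.mk q)) p.1, p.2)

/-- The twisted face `d_i^δ(y, w) = (δ_{w(i)}(d_i y), d_i w)` on `Y_q × Δ[n]_q`. -/
def twistedFace {n : ℕ} (Y : SSet.{u}) (δ : Fin (n + 1) → Aut Y) {q : ℕ}
    (i : Fin (q + 2)) :
    Y _⦋q + 1⦌ × DeltaSimp n (q + 1) → Y _⦋q⦌ × DeltaSimp n q :=
  fun p => ((δ (p.2.1 i)).hom.app (Opposite.op (SimplexCategory.mk q)) (Y.δ i p.1),
    p.2.face i)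

/-- The twisted degeneracy `s_i^δ(y, w) = (δ_{w(i)}⁻¹(s_i y), s_i w)` on `Y_q × Δ[n]_q`. -/
def twistedDegeneracy {n : ℕ} (Y : SSet.{u}) (δ : Fin (n + 1) → Aut Y) {q : ℕ}
    (i : Fin (q + 1)) :
    Y _⦋q⦌ × DeltaSimp n q → Y _⦋q + 1⦌ × DeltaSimp n (q + 1) :=
  fun p => ((δ (p.2.1 i)).inv.app (Opposite.op (SimplexCategory.mk (q + 1))) (Y.σ i p.1),
    p.2.degen i)

end TwistedDelta

section Aux

namespace TwistedDelta

variable {G : Type*} [Group G]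

private lemma prodZ_add : ∀ (m : ℕ) (δ : Fin m → G)
    (_ : ∀ k l, Commute (δ k) (δ l)) (e f : Fin m → ℤ),
    (List.ofFn fun k => δ k ^ (e k + f k)).prod =
      (List.ofFn fun k => δ k ^ e k).prod * (List.ofFn fun k => δ k ^ f k).prod := fun m δ hc e f => match m, δ, hc, e, f with
  | 0, δ, _, e, f => by simp
  | (m + 1), δ, hc, e, f => by
    rw [List.ofFn_succ, List.ofFn_succ, List.ofFn_succ, List.prod_cons, List.prod_cons,
      List.prod_cons, zpow_add,
      prodZ_add m (fun k => δ k.succ) (fun k l => hc _ _) (fun k => e k.succ) (fun k => f k.succ)]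
    have h : Commute ((List.ofFn fun k : Fin m => δ k.succ ^ e k.succ).prod) (δ 0 ^ f 0) := by
      apply Commute.list_prod_left
      intro x hx
      obtain ⟨k, rfl⟩ := List.mem_ofFn.mp hx
      exact (hc _ _).zpow_zpow _ _
    exact h.symm.mul_mul_mul_comm _ _

private lemma prodZ_single : ∀ (m : ℕ) (δ : Fin m → G) (j : Fin m) (z : ℤ),
    (List.ofFn fun k => δ k ^ (if k = j then z else 0)).prod = δ j ^ z := fun m δ j z => match m, δ, j, z with
  | 0, _, j, _ => j.elim0
  | (m + 1), δ, j, z => by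
    induction j using Fin.cases with
    | zero =>
        rw [List.ofFn_succ, List.prod_cons]
        have : (List.ofFn fun k : Fin m => δ k.succ ^
            (if k.succ = (0 : Fin (m + 1)) then z else 0)).prod = 1 := by
          apply List.prod_eq_one
          intro x hx
          obtain ⟨k, rfl⟩ := List.mem_ofFn.mp hx
          simp [Fin.succ_ne_zero]
        rw [this, mul_one]
        simp
    | succ j' =>
        rw [List.ofFn_succ, List.prod_cons,
          if_neg (by simp [(Fin.succ_ne_zero j').symm] : ¬ (0 : Fin (m+1)) = j'.succ),
          zpow_zero, one_mul]
        have : (fun k : Fin m => δ k.succ ^ (if k.succ = j'.succ then z else 0)) =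
            fun k : Fin m => δ k.succ ^ (if k = j' then z else 0) := by
          funext k; simp [Fin.succ_inj]
        rw [this, prodZ_single m (fun k => δ k.succ) j' z]

end TwistedDelta

end Aux

namespace TwistedDelta

lemma mult_degen {n q : ℕ} (k : Fin (n + 1)) (i : Fin (q + 1)) (w : DeltaSimp n q) :
    mult k (w.degen i) = mult k w + (if w.1 i = k then 1 else 0) := by
  unfold mult DeltaSimp.degen
  rw [Finset.card_filter, Finset.card_filter,
    Fin.sum_univ_succAbove (fun p => if (w.1 ∘ i.predAbove) p = k then 1 else 0) i.castSucc]
  simp only [Function.comp_apply, Fin.predAbove_castSucc_self, Fin.predAbove_succAbove]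
  exact add_comm _ _

lemma mult_face {n q : ℕ} (k : Fin (n + 1)) (i : Fin (q + 2)) (w : DeltaSimp n (q + 1)) :
    mult k w = (if w.1 i = k then 1 else 0) + mult k (w.face i) := by
  unfold mult DeltaSimp.face
  rw [Finset.card_filter, Finset.card_filter,
    Fin.sum_univ_succAbove (fun p => if w.1 p = k then 1 else 0) i]
  rfl

lemma untwist_comm {n : ℕ} (Y : SSet.{u}) (δ : Fin (n + 1) → Aut Y)
    (hcomm : ∀ k l : Fin (n + 1), Commute (δ k) (δ l)) {q : ℕ} (w : DeltaSimp n q)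
    (j : Fin (n + 1)) : Commute (untwist Y δ w) (δ j) := by
  apply Commute.list_prod_left
  intro x hx
  obtain ⟨k, rfl⟩ := List.mem_ofFn.mp hx
  exact (hcomm k j).zpow_left _

lemma untwist_degen {n : ℕ} (Y : SSet.{u}) (δ : Fin (n + 1) → Aut Y)
    (hcomm : ∀ k l : Fin (n + 1), Commute (δ k) (δ l)) {q : ℕ} (i : Fin (q + 1))
    (w : DeltaSimp n q) :
    untwist Y δ (w.degen i) = untwist Y δ w * (δ (w.1 i))⁻¹ := by
  have he : (fun k => δ k ^ ((1 : ℤ) - mult k (w.degen i))) =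
      fun k => δ k ^ (((1 : ℤ) - mult k w) + (if k = w.1 i then (-1 : ℤ) else 0)) := by
    funext k
    congr 1
    by_cases h : k = w.1 i
    · rw [mult_degen k i w, if_pos h.symm, if_pos h]; push_cast; ring
    · rw [mult_degen k i w, if_neg (fun e => h e.symm), if_neg h]; push_cast; ring
  rw [untwist, he, prodZ_add _ δ hcomm, prodZ_single, zpow_neg_one]
  rfl

lemma untwist_face {n : ℕ} (Y : SSet.{u}) (δ : Fin (n + 1) → Aut Y)
    (hcomm : ∀ k l : Fin (n + 1), Commute (δ k) (δ l)) {q : ℕ} (i : Fin (q + 2))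
    (w : DeltaSimp n (q + 1)) :
    untwist Y δ (w.face i) = untwist Y δ w * δ (w.1 i) := by
  have he : (fun k => δ k ^ ((1 : ℤ) - mult k (w.face i))) =
      fun k => δ k ^ (((1 : ℤ) - mult k w) + (if k = w.1 i then (1 : ℤ) else 0)) := by
    funext k
    congr 1
    have hm := mult_face k i w
    by_cases h : k = w.1 i
    · rw [if_pos h.symm] at hm; rw [if_pos h, hm]; push_cast; ring
    · rw [if_neg (fun e => h e.symm)] at hm; rw [if_neg h, hm]; push_cast; ring
  rw [untwist, he, prodZ_add _ δ hcomm, prodZ_single, zpow_one]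
  rfl

lemma app_mul {Y : SSet.{u}} (a b : Aut Y) (x : SimplexCategoryᵒᵖ) (z : Y.obj x) :
    (a * b).hom.app x z = a.hom.app x (b.hom.app x z) := rfl

lemma comm_app {Y : SSet.{u}} {a b : Aut Y} (h : Commute a b) (x : SimplexCategoryᵒᵖ)
    (z : Y.obj x) : a.hom.app x (b.hom.app x z) = b.hom.app x (a.hom.app x z) :=
  by have := ConcreteCategory.congr_hom (congrArg (fun c : Aut Y => c.hom.app x) h.eq) z; exact this

lemma nat_app {Y : SSet.{u}} (a : Aut Y) {x x' : SimplexCategoryᵒᵖ} (f : x ⟶ x')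
    (z : Y.obj x) : a.hom.app x' (Y.map f z) = Y.map f (a.hom.app x z) :=
  by have := ConcreteCategory.congr_hom (a.hom.naturality f) z; exact this

end TwistedDelta



/-- for pairwise commuting simplicial automorphisms `δ_0, …, δ_n` of a
simplicial set `Y`, the map `α` intertwines the untwisted degeneracies with the twisted ones,
`s_i^δ(α_q(y, w)) = α_{q+1}(s_i y, s_i w)`, each `α_q` is a bijection, and (together with the
corresponding statement for faces) `α` is an isomorphism of simplicial sets from `Y × Δ[n]`
to the `δ`-twisted Cartesian product `Y ×_δ Δ[n]` commuting with the projections to `Δ[n]`. -/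
theorem TwistedDelta.alpha_iso {n : ℕ} (Y : SSet.{u})
    (δ : Fin (n + 1) → Aut Y)
    (hcomm : ∀ k l : Fin (n + 1), Commute (δ k) (δ l)) :
    -- α intertwines degeneracies
    (∀ (q : ℕ) (i : Fin (q + 1)) (y : Y _⦋q⦌) (w : DeltaSimp n q),
      twistedDegeneracy Y δ i (alphaMap Y δ q (y, w)) =
        alphaMap Y δ (q + 1) (Y.σ i y, w.degen i)) ∧
    -- α intertwines faces
    (∀ (q : ℕ) (i : Fin (q + 2)) (y : Y _⦋q + 1⦌) (w : DeltaSimp n (q + 1)),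
      twistedFace Y δ i (alphaMap Y δ (q + 1) (y, w)) =
        alphaMap Y δ q (Y.δ i y, w.face i)) ∧
    -- each α_q is a bijection
    (∀ q : ℕ, Function.Bijective (alphaMap Y δ q)) ∧
    -- α commutes with the projections to Δ[n]
    (∀ (q : ℕ) (p : Y _⦋q⦌ × DeltaSimp n q), (alphaMap Y δ q p).2 = p.2) := by
  refine ⟨?_, ?_, ?_, ?_⟩
  · intro q i y w
    refine Prod.ext ?_ rfl
    show (δ (w.1 i)).inv.app _ (Y.σ i ((untwist Y δ w).hom.app _ y)) =
      (untwist Y δ (w.degen i)).hom.app _ (Y.σ i y)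
    rw [untwist_degen Y δ hcomm i w,
      show Y.σ i ((untwist Y δ w).hom.app _ y) = (untwist Y δ w).hom.app _ (Y.σ i y) from
        (nat_app (untwist Y δ w) (SimplexCategory.σ i).op y).symm]
    have hc : Commute ((δ (w.1 i))⁻¹) (untwist Y δ w) :=
      ((untwist_comm Y δ hcomm w (w.1 i)).inv_right).symm
    exact comm_app hc _ (Y.σ i y)
  · intro q i y w
    refine Prod.ext ?_ rfl
    show (δ (w.1 i)).hom.app _ (Y.δ i ((untwist Y δ w).hom.app _ y)) =
      (untwist Y δ (w.face i)).hom.app _ (Y.δ i y)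
    rw [untwist_face Y δ hcomm i w,
      show Y.δ i ((untwist Y δ w).hom.app _ y) = (untwist Y δ w).hom.app _ (Y.δ i y) from
        (nat_app (untwist Y δ w) (SimplexCategory.δ i).op y).symm]
    have hc : Commute (δ (w.1 i)) (untwist Y δ w) :=
      (untwist_comm Y δ hcomm w (w.1 i)).symm
    exact comm_app hc _ (Y.δ i y)
  · intro q
    refine Function.bijective_iff_has_inverse.mpr
      ⟨fun p => ((untwist Y δ p.2).inv.app _ p.1, p.2), ?_, ?_⟩
    · intro p
      refine Prod.ext ?_ rfl
      show (untwist Y δ p.2).inv.app _ ((untwist Y δ p.2).hom.app _ p.1) = p.1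
      exact ConcreteCategory.congr_hom ((untwist Y δ p.2).hom_inv_id_app _) p.1
    · intro p
      refine Prod.ext ?_ rfl
      show (untwist Y δ p.2).hom.app _ ((untwist Y δ p.2).inv.app _ p.1) = p.1
      exact ConcreteCategory.congr_hom ((untwist Y δ p.2).inv_hom_id_app _) p.1
  · intro q p
    rfl
end

section
/- Let C be a small category, C⁺ = WithInitial(C) with adjoined initial object a, A an abelian group regarded as a discrete simplicial group, and δ an assignment of endomorphisms δ_v of A to the objects of C⁺ satisfying δ_v ∘ δ_w = δ_w ∘ δ_v whenever there is a morphism between v and w, with δ_a an automorphism. Consider the chain complex with C_n = ⊕_{x ∈ N(C⁺)_n, x ≠ aⁿ} A and differential ∂_n(g_x) = Σ_{i=0}^n (−1)^i (δ_{v_i}(g))_{d_i x}, and let Φ(g_x) = (δ_a^{-1}(g))_{a·x}. Then ∂_{n+1} ∘ Φ_n + Φ_{n−1} ∘ ∂_n = id on C_n for all n ≥ 1 and ∂_1 ∘ Φ_0 = id on C_0; consequently the chain complex {C_n, ∂_n} is contractible, i.e. H_n(C_*, ∂_*) = 0 for all n ≥ 0. -/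
open CategoryTheory Simplicial DirectSum

universe u

attribute [local instance] Classical.decEq

namespace ConeCat

variable (C : Type u) [SmallCategory C]

/-- The `n`-simplices of the nerve of `C⁺ = WithInitial C`. -/
abbrev NerveP (n : ℕ) : Type u := ComposableArrows (WithInitial C) n

/-- The face map of the nerve of `C⁺`. -/
def nerveFace {n : ℕ} (i : Fin (n + 2)) (x : NerveP C (n + 1)) : NerveP C n :=
  (nerve (WithInitial C)).δ i x

/-- The totally degenerate `n`-simplex `aⁿ` at the adjoined initial object `a = star`. -/
def basept (n : ℕ) : NerveP C n :=
  (CategoryTheory.Functor.const (Fin (n + 1))).obj (WithInitial.star)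

/-- `a·x`: the `(n+1)`-simplex obtained from `x` by prepending the initial object `a` via
its unique morphism to the first vertex of `x`. -/
def aDot {n : ℕ} (x : NerveP C n) : NerveP C (n + 1) :=
  x.precomp (Limits.IsInitial.to WithInitial.starInitial x.left)

variable (A : Type u) [AddCommGroup A]

/-- `C_n = ⊕_{x ∈ N(C⁺)_n, x ≠ aⁿ} A`. -/
abbrev Cn (n : ℕ) : Type u :=
  ⨁ _ : { x : NerveP C n // x ≠ basept C n }, A

/-- The inclusion of the copy of `A` labelled by `x`; the copy labelled by the basepoint
simplex `aⁿ` is set to zero. -/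
noncomputable def embHom {n : ℕ} (x : NerveP C n) : A →+ Cn C A n :=
  if h : x = basept C n then 0
  else DirectSum.of (fun _ : { x : NerveP C n // x ≠ basept C n } => A) ⟨x, h⟩

/-- The twisted face homomorphism `d_i^δ(g_x) = (δ_{v_i}(g))_{d_i x}` (the group `A` being a
discrete simplicial group, `d_i` acts as the identity on `A`). -/
noncomputable def dFace (δ : WithInitial C → (A →+ A)) (n : ℕ) (i : Fin (n + 2)) :
    Cn C A (n + 1) →+ Cn C A n :=
  DirectSum.toAddMonoid fun x => (embHom C A (nerveFace C i x.1)).comp (δ (x.1.obj i))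

/-- The contracting homotopy `Φ(g_x) = (δ_a⁻¹(g))_{a·x}`. -/
noncomputable def Phi (σa : A ≃+ A) (n : ℕ) : Cn C A n →+ Cn C A (n + 1) :=
  DirectSum.toAddMonoid fun x => (embHom C A (aDot C x.1)).comp σa.symm.toAddMonoidHom

/-- The twisted differential `∂_{n+1} = Σᵢ (−1)^i d_i^δ : C_{n+1} → C_n`. -/
noncomputable def bdry (δ : WithInitial C → (A →+ A)) (n : ℕ) :
    Cn C A (n + 1) →+ Cn C A n :=
  ∑ i : Fin (n + 2), ((-1 : ℤ) ^ (i : ℕ)) • dFace C A δ n i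

end ConeCat

namespace ConeCat
variable {C : Type u} [SmallCategory C]

lemma hom_to_star_ext {X Y : WithInitial C} (hY : Y = WithInitial.star) (f g : X ⟶ Y) :
    f = g := by
  subst hY
  cases X
  · exact PEmpty.elim f
  · exact @Subsingleton.elim PUnit _ f g

lemma hom_from_star_ext {X Y : WithInitial C} (hX : X = WithInitial.star) (f g : X ⟶ Y) :
    f = g := by
  subst hX; exact Subsingleton.elim f g

lemma basept_obj (n : ℕ) (i : Fin (n+1)) : (basept C n).obj i = WithInitial.star := rfl

lemma eq_basept {n : ℕ} (x : NerveP C n) (h : ∀ i, x.obj i = WithInitial.star) :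
    x = basept C n := by
  apply ComposableArrows.ext h
  intro i hi
  apply hom_to_star_ext (h _)

lemma aDot_basept (n : ℕ) : aDot C (basept C n) = basept C (n+1) := by
  apply eq_basept
  intro i
  induction i using Fin.cases with
  | zero => rfl
  | succ k => rfl

lemma aDot_eq_basept_iff {n : ℕ} (x : NerveP C n) :
    aDot C x = basept C (n+1) ↔ x = basept C n := by
  constructor
  · intro h
    apply eq_basept
    intro i
    have := congrArg (fun y : NerveP C (n+1) => y.obj i.succ) h
    exact this
  · rintro rfl; exact aDot_basept n

lemma fin_hom_eq {m : ℕ} {a b : Fin m} (f g : a ⟶ b) : f = g :=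
  @Subsingleton.elim (ULift (PLift (a ≤ b))) _ f g

lemma Fmap_congr {D : Type*} [Category D] {m : ℕ} (F : Fin m ⥤ D) {a b a' b' : Fin m}
    (ha : a = a') (hb : b = b') (f : a ⟶ b) (f' : a' ⟶ b') :
    F.map f = eqToHom (by rw [ha]) ≫ F.map f' ≫ eqToHom (by rw [← hb]) := by
  subst ha; subst hb
  rw [fin_hom_eq f f']; simp

set_option maxHeartbeats 4000000 in
lemma face_succ_aDot {n : ℕ} (x : NerveP C (n+1)) (j : Fin (n+2)) :
    nerveFace C j.succ (aDot C x) = aDot C (nerveFace C j x) := by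
  have hobj : ∀ i, (nerveFace C j.succ (aDot C x)).obj i = (aDot C (nerveFace C j x)).obj i := by
    intro i
    induction i using Fin.cases with
    | zero =>
        show (aDot C x).obj (j.succ.succAbove 0) = _
        rw [Fin.succ_succAbove_zero]
        rfl
    | succ k =>
        show (aDot C x).obj (j.succ.succAbove k.succ) = _
        rw [Fin.succ_succAbove_succ]
        rfl
  apply ComposableArrows.ext hobj
  intro i hi
  match i, hi with
  | 0, hi =>
      apply hom_from_star_ext
      show (aDot C x).obj (j.succ.succAbove 0) = _
      rw [Fin.succ_succAbove_zero]
      rfl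
  | (k+1), hi =>
      have e1 : j.succ.succAbove (⟨k+1, by omega⟩ : Fin (n+2)) =
          (j.succAbove ⟨k, by omega⟩).succ := by
        rw [show (⟨k+1, by omega⟩ : Fin (n+2)) = (⟨k, by omega⟩ : Fin (n+1)).succ from rfl,
          Fin.succ_succAbove_succ]
      have e2 : j.succ.succAbove (⟨k+2, by omega⟩ : Fin (n+2)) =
          (j.succAbove ⟨k+1, by omega⟩).succ := by
        rw [show (⟨k+2, by omega⟩ : Fin (n+2)) = (⟨k+1, by omega⟩ : Fin (n+1)).succ from rfl,
          Fin.succ_succAbove_succ]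
      have h' : (j.succAbove ⟨k, by omega⟩).succ ≤ (j.succAbove ⟨k+1, by omega⟩).succ := by
        rw [Fin.succ_le_succ_iff]
        exact (Fin.succAbove_le_succAbove_iff (p := j)).mpr (by simp [Fin.le_def])
      have step : ComposableArrows.map' (nerveFace C j.succ (aDot C x)) (k+1) (k+1+1)
            (by omega) hi =
          eqToHom (congrArg (aDot C x).obj e1) ≫ (aDot C x).map (homOfLE h') ≫
            eqToHom (congrArg (aDot C x).obj e2).symm :=
        Fmap_congr (aDot C x) e1 e2
          (homOfLE ((Fin.succAbove_le_succAbove_iff (p := j.succ)).mpr (by simp [Fin.le_def])))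
          (homOfLE h')
      rw [step]
      have mid : (aDot C x).map (homOfLE h') =
          ComposableArrows.map' (aDot C (nerveFace C j x)) (k+1) (k+1+1) (by omega) hi :=
        congrArg x.map (fin_hom_eq _ _)
      rw [mid]
      rfl

lemma face_zero_aDot {n : ℕ} (x : NerveP C n) : nerveFace C 0 (aDot C x) = x := rfl

lemma aDot_obj_succ {n : ℕ} (x : NerveP C n) (j : Fin (n+1)) :
    (aDot C x).obj j.succ = x.obj j := rfl

lemma face_one_aDot_zero (x : NerveP C 0) : nerveFace C 1 (aDot C x) = basept C 0 := by
  apply eq_basept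
  intro i
  fin_cases i
  rfl

lemma face_basept {n : ℕ} (i : Fin (n+2)) : nerveFace C i (basept C (n+1)) = basept C n := by
  apply eq_basept
  intro k
  rfl

variable (C) (A : Type u) [AddCommGroup A]

lemma embHom_basept (n : ℕ) : embHom C A (basept C n) = 0 := dif_pos rfl

lemma embHom_eq {n : ℕ} (x : NerveP C n) (hx : x ≠ basept C n) :
    embHom C A x = DirectSum.of (fun _ : { x : NerveP C n // x ≠ basept C n } => A) ⟨x, hx⟩ :=
  dif_neg hx

variable {σa : A ≃+ A} {δ : WithInitial C → (A →+ A)}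

lemma Phi_embHom {n : ℕ} (x : NerveP C n) (g : A) :
    Phi C A σa n (embHom C A x g) = embHom C A (aDot C x) (σa.symm g) := by
  by_cases h : x = basept C n
  · subst h
    rw [embHom_basept, aDot_basept, embHom_basept]
    simp
  · rw [embHom_eq C A x h]
    exact DirectSum.toAddMonoid_of _ _ _

lemma bdry_embHom {m : ℕ} (y : NerveP C (m+1)) (h : A) :
    bdry C A δ m (embHom C A y h) =
      ∑ i : Fin (m+2), ((-1:ℤ)^(i:ℕ)) • embHom C A (nerveFace C i y) (δ (y.obj i) h) := by
  by_cases hy : y = basept C (m+1)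
  · subst hy
    rw [embHom_basept]
    simp only [map_zero, AddMonoidHom.zero_apply, face_basept, embHom_basept,
      AddMonoidHom.zero_apply, smul_zero, Finset.sum_const_zero]
  · rw [embHom_eq C A y hy]
    rw [bdry, AddMonoidHom.finset_sum_apply]
    congr 1
    ext i
    rw [AddMonoidHom.smul_apply, dFace, DirectSum.toAddMonoid_of]
    rfl

lemma delta_star_symm (hσa : σa.toAddMonoidHom = δ WithInitial.star) (g : A) :
    δ WithInitial.star (σa.symm g) = g := by
  rw [← hσa]; simp

lemma delta_comm (hcomm : ∀ v w : WithInitial C, (Nonempty (v ⟶ w) ∨ Nonempty (w ⟶ v)) →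
      (δ v).comp (δ w) = (δ w).comp (δ v))
    (hσa : σa.toAddMonoidHom = δ WithInitial.star) (v : WithInitial C) (g : A) :
    σa.symm (δ v g) = δ v (σa.symm g) := by
  have h := hcomm WithInitial.star v (Or.inl ⟨default⟩)
  rw [← hσa] at h
  have h2 := congrArg (fun f : A →+ A => f (σa.symm g)) h
  simp only [AddMonoidHom.comp_apply, AddEquiv.coe_toAddMonoidHom] at h2
  rw [AddEquiv.apply_symm_apply] at h2
  exact σa.symm_apply_eq.mpr h2.symm

lemma aDot_obj_zero {n : ℕ} (x : NerveP C n) : (aDot C x).obj 0 = WithInitial.star := rfl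

lemma homotopy_gen
    (hcomm : ∀ v w : WithInitial C, (Nonempty (v ⟶ w) ∨ Nonempty (w ⟶ v)) →
      (δ v).comp (δ w) = (δ w).comp (δ v))
    (hσa : σa.toAddMonoidHom = δ WithInitial.star) {m : ℕ} (x : NerveP C (m+1)) (g : A) :
    bdry C A δ (m+1) (Phi C A σa (m+1) (embHom C A x g)) +
      Phi C A σa m (bdry C A δ m (embHom C A x g)) = embHom C A x g := by
  rw [Phi_embHom, bdry_embHom, bdry_embHom, Fin.sum_univ_succ, map_sum]
  simp only [map_zsmul, Phi_embHom, delta_comm C A hcomm hσa, face_zero_aDot, Fin.val_zero,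
    pow_zero, one_smul, Fin.val_succ, face_succ_aDot, aDot_obj_succ, aDot_obj_zero,
    delta_star_symm C A hσa]
  rw [add_assoc, ← Finset.sum_add_distrib]
  rw [Finset.sum_eq_zero, add_zero]
  intro j _
  rw [pow_succ, mul_neg_one, neg_smul, neg_add_cancel]

lemma homotopy_gen0 (hσa : σa.toAddMonoidHom = δ WithInitial.star) (x : NerveP C 0) (g : A) :
    bdry C A δ 0 (Phi C A σa 0 (embHom C A x g)) = embHom C A x g := by
  rw [Phi_embHom, bdry_embHom, Fin.sum_univ_two]
  simp only [face_zero_aDot, Fin.val_zero, pow_zero, one_smul, Fin.val_one, pow_one,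
    face_one_aDot_zero, aDot_obj_zero, delta_star_symm C A hσa, embHom_basept,
    AddMonoidHom.zero_apply, smul_zero, add_zero]

end ConeCat


open ConeCat in
/-- let `C⁺ = WithInitial C` be `C` with a freely adjoined initial object `a`,
`A` an abelian group regarded as a discrete simplicial group, and `δ` a twisted structure on
`C⁺` with coefficients in `A` such that `δ_a` is an automorphism (witnessed by `σa`).  Then
`Φ` is a contracting homotopy for the twisted chain complex `{C_n, ∂_n}`:
`∂_{n+1} ∘ Φ_n + Φ_{n−1} ∘ ∂_n = id` for `n ≥ 1` and `∂_1 ∘ Φ_0 = id`; consequently the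
chain complex is contractible, i.e. `H_n(C_*, ∂_*) = 0` for all `n ≥ 0`. -/
theorem ConeCat.chain_complex_contractible (C : Type u) [SmallCategory C]
    (A : Type u) [AddCommGroup A]
    (δ : WithInitial C → (A →+ A))
    (hcomm : ∀ v w : WithInitial C, (Nonempty (v ⟶ w) ∨ Nonempty (w ⟶ v)) →
      (δ v).comp (δ w) = (δ w).comp (δ v))
    (σa : A ≃+ A) (hσa : σa.toAddMonoidHom = δ WithInitial.star) :
    -- `∂_{n+1} ∘ Φ_n + Φ_{n−1} ∘ ∂_n = id` on `C_n` for `n ≥ 1`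
    (∀ n : ℕ,
      (bdry C A δ (n + 1)).comp (Phi C A σa (n + 1)) +
        (Phi C A σa n).comp (bdry C A δ n) = AddMonoidHom.id (Cn C A (n + 1))) ∧
    -- `∂_1 ∘ Φ_0 = id` on `C_0`
    ((bdry C A δ 0).comp (Phi C A σa 0) = AddMonoidHom.id (Cn C A 0)) ∧
    -- `H_0 = 0`: the boundary `∂_1` is surjective
    Function.Surjective (bdry C A δ 0) ∧
    -- `H_{n+1} = 0`: every cycle is a boundary
    (∀ (n : ℕ) (x : Cn C A (n + 1)), bdry C A δ n x = 0 →
      x ∈ Set.range (bdry C A δ (n + 1))) := by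
  have part1 : ∀ n : ℕ,
      (bdry C A δ (n + 1)).comp (Phi C A σa (n + 1)) +
        (Phi C A σa n).comp (bdry C A δ n) = AddMonoidHom.id (Cn C A (n + 1)) := by
    intro n
    apply DirectSum.addHom_ext
    rintro ⟨x, hx⟩ g
    simp only [AddMonoidHom.add_apply, AddMonoidHom.comp_apply, AddMonoidHom.id_apply]
    rw [← embHom_eq C A x hx]
    exact homotopy_gen C A hcomm hσa x g
  have part2 : (bdry C A δ 0).comp (Phi C A σa 0) = AddMonoidHom.id (Cn C A 0) := by
    apply DirectSum.addHom_ext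
    rintro ⟨x, hx⟩ g
    simp only [AddMonoidHom.comp_apply, AddMonoidHom.id_apply]
    rw [← embHom_eq C A x hx]
    exact homotopy_gen0 C A hσa x g
  refine ⟨part1, part2, ?_, ?_⟩
  · intro y
    exact ⟨Phi C A σa 0 y, by
      have := congrArg (fun f : Cn C A 0 →+ Cn C A 0 => f y) part2
      simpa using this⟩
  · intro n x hx
    refine ⟨Phi C A σa (n+1) x, ?_⟩
    have := congrArg (fun f : Cn C A (n+1) →+ Cn C A (n+1) => f x) (part1 n)
    simp only [AddMonoidHom.add_apply, AddMonoidHom.comp_apply, AddMonoidHom.id_apply] at this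
    rw [hx, map_zero, add_zero] at this
    exact this
end
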